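/- Let G be a group with elements x_{ts} for n ≥ t > s ≥ 1 satisfying the Birman-Ko-Lee relations. Then for t > t_3 > t_2 > t_1 with t_2 > s, one has x_{ts} x_{t_2 t_1} x_{t_3 t_1} = x_{t_3 t_2} x_{ts} x_{t_2 t_1}. -/
import Mathlib


theorem bkl_lemma3a {G : Type*} [Group G] (n : ℕ) (x : ℕ → ℕ → G)
    (hcomm : ∀ t s r q : ℕ, t ≤ n → s < t → 1 ≤ s → r ≤ n → q < r → 1 ≤ q →
      0 < ((t : ℤ) - r) * ((t : ℤ) - q) * ((s : ℤ) - r) * ((s : ℤ) - q) →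
      x t s * x r q = x r q * x t s)
    (hband1 : ∀ t s r : ℕ, t ≤ n → s < t → r < s → 1 ≤ r →
      x t s * x s r = x t r * x t s)
    (hband2 : ∀ t s r : ℕ, t ≤ n → s < t → r < s → 1 ≤ r →
      x t r * x t s = x s r * x t r) :
    ∀ t s t₁ t₂ t₃ : ℕ, t ≤ n → t₃ < t → t₂ < t₃ → t₁ < t₂ → 1 ≤ t₁ → s < t₂ → 1 ≤ s →
      x t s * x t₂ t₁ * x t₃ t₁ = x t₃ t₂ * x t s * x t₂ t₁ := by
  intro t s t₁ t₂ t₃ htn h3t h23 h12 h1 hs2 hs1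
  have h3n : t₃ ≤ n := le_trans h3t.le htn
  have key : x t₂ t₁ * x t₃ t₁ = x t₃ t₂ * x t₂ t₁ := by
    have a := hband1 t₃ t₂ t₁ h3n h23 h12 h1
    have b := hband2 t₃ t₂ t₁ h3n h23 h12 h1
    rw [a, b]
  have hc : x t s * x t₃ t₂ = x t₃ t₂ * x t s := by
    apply hcomm t s t₃ t₂ htn (lt_trans hs2 (lt_trans h23 h3t)) hs1 h3n h23
      (le_trans h1 h12.le)
    have h1' : (t₃ : ℤ) < t := by exact_mod_cast h3t
    have h2' : (t₂ : ℤ) < t₃ := by exact_mod_cast h23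
    have h3' : (s : ℤ) < t₂ := by exact_mod_cast hs2
    have hp := mul_pos (mul_pos (by linarith : (0:ℤ) < (t:ℤ) - t₃)
      (by linarith : (0:ℤ) < (t:ℤ) - t₂))
      (mul_pos (by linarith : (0:ℤ) < (t₃:ℤ) - s) (by linarith : (0:ℤ) < (t₂:ℤ) - s))
    nlinarith [hp]
  calc x t s * x t₂ t₁ * x t₃ t₁ = x t s * (x t₃ t₂ * x t₂ t₁) := by
        rw [mul_assoc, key]
    _ = x t₃ t₂ * x t s * x t₂ t₁ := by rw [← mul_assoc, hc]
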